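/- arXiv:2102.00906 — 5 statements merged into one kernel-verified Lean document; each statement's English description precedes it below -/
import Mathlib

section
/- A nonempty product of distinct Fermat numbers is never a perfect square. -/
def fermat (n : ℕ) : ℕ := 2 ^ (2 ^ n) + 1

lemma fermat_eq (n : ℕ) : fermat n = Nat.fermatNumber n := rfl

lemma fermat_not_square (n : ℕ) : ¬ IsSquare (fermat n) := by
  rintro ⟨r, hr⟩
  rcases n with _ | m
  · have : r < 2 := by nlinarith [show fermat 0 = 3 from rfl, hr.symm]
    interval_cases r <;> simp_all [fermat]
  · set m2 : ℕ := 2 ^ (2 ^ m) with hm2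
    have h1 : 1 ≤ m2 := Nat.one_le_two_pow
    have hf : fermat (m + 1) = m2 * m2 + 1 := by
      simp only [fermat, hm2, ← pow_add, pow_succ]
      ring_nf
    rw [hf] at hr
    have hlt : m2 < r := by nlinarith
    have : r * r ≥ (m2 + 1) * (m2 + 1) := Nat.mul_le_mul hlt hlt
    nlinarith

lemma isSquare_of_coprime_mul {a b c : ℕ} (h : Nat.Coprime a b) (hc : a * b = c * c) :
    IsSquare a := by
  obtain ⟨d, hd⟩ := exists_eq_pow_of_mul_eq_pow (a := a) (b := b) (k := 2) (c := c)
    (by simp [Nat.isUnit_iff]; exact h.gcd_eq_one) (by rw [hc, sq])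
  exact ⟨d, by rw [hd, sq]⟩

theorem fermat_prod_not_square (S : Finset ℕ) (hS : S.Nonempty) :
    ¬ IsSquare (∏ n ∈ S, fermat n) := by
  induction S using Finset.cons_induction with
  | empty => exact absurd hS (by simp)
  | cons a s ha ih =>
    rw [Finset.prod_cons]
    rintro ⟨c, hc⟩
    have hcop : Nat.Coprime (fermat a) (∏ n ∈ s, fermat n) := by
      apply Nat.Coprime.prod_right
      intro i hi
      simpa [fermat_eq] using
        Nat.coprime_fermatNumber_fermatNumber (fun h : a = i => ha (h ▸ hi))
    exact fermat_not_square a (isSquare_of_coprime_mul hcop hc)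
end

section
/- (Pépin's test, sufficiency) Let n ≥ 1. If 3^((F_n − 1)/2) ≡ −1 (mod F_n), then F_n is prime. -/
theorem pepin_sufficiency {n : ℕ} (hn : 1 ≤ n)
    (h : (3 : ZMod (fermat n)) ^ ((fermat n - 1) / 2) = -1) :
    Nat.Prime (fermat n) := by
  have hsub : fermat n - 1 = 2 ^ 2 ^ n := by simp [fermat]
  have h2 : 2 < fermat n := by
    have : (2:ℕ) ≤ 2 ^ 2 ^ n := Nat.le_self_pow (by positivity) 2
    simp only [fermat]; omega
  haveI : Fact (2 < fermat n) := ⟨h2⟩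
  apply lucas_primality (fermat n) 3
  · have : fermat n - 1 = 2 * ((fermat n - 1) / 2) := by
      rw [hsub]
      have he : Even ((2:ℕ) ^ 2 ^ n) := by
        refine (Nat.even_pow).mpr ⟨even_two, by positivity⟩
      obtain ⟨k, hk⟩ := he; omega
    rw [this, mul_comm, pow_mul, h]; ring
  · intro q hq hqd
    have hq2 : q = 2 := by
      have : q ∣ 2 := hq.dvd_of_dvd_pow (hsub ▸ hqd)
      exact (Nat.prime_dvd_prime_iff_eq hq Nat.prime_two).mp this
    rw [hq2, h]
    exact ZMod.neg_one_ne_one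
end

section
/- (Pépin's test, necessity) Let n ≥ 1. If F_n is prime, then 3^((F_n − 1)/2) ≡ −1 (mod F_n). -/
theorem pepin_necessity {n : ℕ} (hn : 1 ≤ n) (hp : Nat.Prime (fermat n)) :
    (3 : ZMod (fermat n)) ^ ((fermat n - 1) / 2) = -1 := by
  haveI : Fact (Nat.Prime (fermat n)) := ⟨hp⟩
  have h4 : fermat n % 4 = 1 := by
    have : 2 ^ (2 ^ n) % 4 = 0 := by
      have h2 : 2 ≤ 2 ^ n := by
        calc 2 = 2 ^ 1 := rfl
        _ ≤ 2 ^ n := Nat.pow_le_pow_right (by norm_num) hn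
      obtain ⟨k, hk⟩ := Nat.exists_eq_add_of_le h2
      rw [hk, pow_add]
      simp [Nat.mul_mod]
    simp [fermat, Nat.add_mod, this]
  have h3 : fermat n % 3 = 2 := by
    have : 2 ^ (2 ^ n) % 3 = 1 := by
      have : 2 ^ (2 ^ n) = 4 ^ (2 ^ (n - 1)) := by
        obtain ⟨m, rfl⟩ := Nat.exists_eq_add_of_le hn
        rw [show (4 : ℕ) = 2 ^ 2 from rfl, ← pow_mul]
        congr 1
        simp [pow_add, Nat.add_sub_cancel_left, two_mul]
      rw [this, Nat.pow_mod]
      norm_num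
    simp [fermat, Nat.add_mod, this]
  have hne2 : fermat n ≠ 2 := by
    intro h; rw [h] at h4; norm_num at h4
  have hmod : (fermat n - 1) / 2 = fermat n / 2 := by omega
  rw [hmod]
  have := legendreSym.eq_pow (fermat n) 3
  push_cast at this
  rw [← this]
  have hrec : legendreSym (fermat n) 3 = legendreSym 3 (fermat n) :=
    (legendreSym.quadratic_reciprocity_one_mod_four h4 (by norm_num)).symm
  have hne : legendreSym 3 (fermat n) = legendreSym 3 2 := by
    have h : ((fermat n : ℤ) % ((3:ℕ):ℤ)) = 2 := by push_cast; omega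
    rw [legendreSym.mod, h]
  have h2 : legendreSym 3 2 = -1 := by decide
  rw [hrec, hne, h2]
  push_cast
  ring
end

section
/- Let p be an odd prime, write p − 1 = 2^e · k with k odd, and let f be the multiplicative order of 2 modulo k. Then for every m ≥ e, 2^(2^(m+f)) ≡ 2^(2^m) (mod p); equivalently, F_{m+f} ≡ F_m (mod p). In other words, the sequence of Fermat numbers is eventually periodic modulo p. -/
theorem fermat_eventually_periodic {p e k f : ℕ} (hp : p.Prime) (hodd : Odd p)
    (hfac : p - 1 = 2 ^ e * k) (hk : Odd k) (hf : f = orderOf (2 : ZMod k)) :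
    ∀ m, e ≤ m →
      2 ^ (2 ^ (m + f)) ≡ 2 ^ (2 ^ m) [MOD p] ∧ fermat (m + f) ≡ fermat m [MOD p] := by
  intro m hm
  haveI : Fact p.Prime := ⟨hp⟩
  have hp2 : 2 ≤ p := hp.two_le
  have hk0 : k ≠ 0 := by
    rintro rfl
    simp at hfac
    omega
  haveI : NeZero k := ⟨hk0⟩
  have hkdvd : k ∣ 2 ^ f - 1 := by
    have h1 : (2 : ZMod k) ^ f = 1 := hf ▸ pow_orderOf_eq_one _
    have h2 : ((2 ^ f - 1 : ℕ) : ZMod k) = 0 := by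
      rw [Nat.cast_sub (Nat.one_le_two_pow)]
      push_cast
      rw [h1]; ring
    exact (ZMod.natCast_eq_zero_iff _ _).mp h2
  have hdvd : (p - 1) ∣ 2 ^ (m + f) - 2 ^ m := by
    have heq : 2 ^ (m + f) - 2 ^ m = 2 ^ m * (2 ^ f - 1) := by
      rw [Nat.mul_sub, pow_add, mul_one]
    rw [heq, hfac]
    exact mul_dvd_mul (pow_dvd_pow 2 hm) hkdvd
  obtain ⟨t, ht⟩ := hdvd
  have hle : 2 ^ m ≤ 2 ^ (m + f) := Nat.pow_le_pow_right (by norm_num) (Nat.le_add_right _ _)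
  have hexp : 2 ^ (m + f) = 2 ^ m + (p - 1) * t := by omega
  have hne2 : p ≠ 2 := by
    rintro rfl
    exact (Nat.not_odd_iff_even.mpr (by norm_num)) hodd
  have h2ne : (2 : ZMod p) ≠ 0 := by
    intro h
    have : ((2 : ℕ) : ZMod p) = 0 := by exact_mod_cast h
    have := (ZMod.natCast_eq_zero_iff 2 p).mp this
    exact hne2 ((Nat.prime_dvd_prime_iff_eq hp Nat.prime_two).mp this)
  have hmain : (2:ℕ) ^ (2 ^ (m + f)) ≡ 2 ^ (2 ^ m) [MOD p] := by
    rw [← ZMod.natCast_eq_natCast_iff]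
    push_cast
    rw [hexp, pow_add, pow_mul, ZMod.pow_card_sub_one_eq_one h2ne, one_pow, mul_one]
  exact ⟨hmain, Nat.ModEq.add_right 1 hmain⟩
end

section
/- Let p be an odd prime, write p − 1 = 2^e · k with k odd, and let f be the multiplicative order of 2 modulo k. If there exists m ≥ e such that F_m is a quadratic residue modulo p (and p ∤ F_m), then there exist infinitely many n such that F_n is a quadratic residue modulo p; hence p is not an elite prime. -/
theorem not_elite_of_qr {p e k f : ℕ} (hp : p.Prime) (hodd : Odd p)
    (hfac : p - 1 = 2 ^ e * k) (hk : Odd k) (hf : f = orderOf (2 : ZMod k))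
    {m : ℕ} (hm : e ≤ m) (hpF : ¬ p ∣ fermat m)
    (hQR : ∃ x : ℕ, x ^ 2 ≡ fermat m [MOD p]) :
    (∀ N : ℕ, ∃ n, N ≤ n ∧ ∃ x : ℕ, x ^ 2 ≡ fermat n [MOD p]) ∧
      ¬ (∃ N : ℕ, ∀ n, N ≤ n → ¬ ∃ x : ℕ, x ^ 2 ≡ fermat n [MOD p]) := by
  have hk0 : k ≠ 0 := by
    rintro rfl
    exact (Nat.not_odd_iff_even.mpr Even.zero) hk
  haveI : NeZero k := ⟨hk0⟩
  -- 2 is a unit mod k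
  have hcop : Nat.Coprime 2 k := by
    rw [Nat.prime_two.coprime_iff_not_dvd]
    rintro ⟨c, rfl⟩
    obtain ⟨d, hd⟩ := hk
    omega
  have hunit : IsUnit (2 : ZMod k) := by
    have := (ZMod.isUnit_iff_coprime 2 k).mpr hcop
    simpa using this
  -- f is positive
  have hf0 : 0 < f := by
    obtain ⟨u, hu⟩ := hunit
    rw [hf, ← hu, orderOf_units]
    exact orderOf_pos u
  -- k divides 2^f - 1
  have hpow1 : (2 : ZMod k) ^ f = 1 := by rw [hf]; exact pow_orderOf_eq_one _
  have hkd : (2 : ℕ) ^ f ≡ 1 [MOD k] := by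
    have : ((2 ^ f : ℕ) : ZMod k) = ((1 : ℕ) : ZMod k) := by push_cast; simpa using hpow1
    exact (ZMod.natCast_eq_natCast_iff _ _ _).mp this
  have hkdvd : k ∣ 2 ^ f - 1 := (Nat.modEq_iff_dvd' (Nat.one_le_two_pow)).mp hkd.symm
  -- 2 ≠ 0 in ZMod p
  have hp2 : p ≠ 2 := by
    rintro rfl
    exact (Nat.not_odd_iff_even.mpr even_two) hodd
  have h2ne : (2 : ZMod p) ≠ 0 := by
    intro h
    have : ((2 : ℕ) : ZMod p) = 0 := by push_cast; exact h
    have := (ZMod.natCast_eq_zero_iff 2 p).mp this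
    exact hp2 ((Nat.prime_dvd_prime_iff_eq hp Nat.prime_two).mp this)
  haveI : Fact p.Prime := ⟨hp⟩
  -- key single-step periodicity
  have hstep : ∀ n, e ≤ n → fermat n ≡ fermat (n + f) [MOD p] := by
    intro n hn
    have hdvd : p - 1 ∣ 2 ^ n * (2 ^ f - 1) := by
      rw [hfac]
      exact mul_dvd_mul (pow_dvd_pow 2 hn) hkdvd
    obtain ⟨c, hc⟩ := hdvd
    have hexp : 2 ^ (n + f) = 2 ^ n + 2 ^ n * (2 ^ f - 1) := by
      have hpa : (2 : ℕ) ^ (n + f) = 2 ^ n * 2 ^ f := pow_add 2 n f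
      have hle : (2 : ℕ) ^ n ≤ 2 ^ n * 2 ^ f :=
        Nat.le_mul_of_pos_right _ (Nat.pow_pos (n := f) (by norm_num))
      rw [Nat.mul_sub, mul_one]
      omega
    have hz : ((fermat (n + f) : ℕ) : ZMod p) = ((fermat n : ℕ) : ZMod p) := by
      unfold fermat
      push_cast
      rw [hexp, pow_add, hc, pow_mul, ZMod.pow_card_sub_one_eq_one h2ne, one_pow, mul_one]
    exact ((ZMod.natCast_eq_natCast_iff _ _ _).mp hz).symm
  -- iterate
  have hper : ∀ j : ℕ, fermat m ≡ fermat (m + j * f) [MOD p] := by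
    intro j
    induction j with
    | zero => simp [Nat.ModEq.refl]
    | succ j ih =>
      have : m + (j + 1) * f = (m + j * f) + f := by ring
      rw [this]
      exact ih.trans (hstep (m + j * f) (le_trans hm (Nat.le_add_right _ _)))
  obtain ⟨x, hx⟩ := hQR
  have main : ∀ N : ℕ, ∃ n, N ≤ n ∧ ∃ x : ℕ, x ^ 2 ≡ fermat n [MOD p] := by
    intro N
    refine ⟨m + N * f, ?_, x, hx.trans (hper N)⟩
    have : N * 1 ≤ N * f := Nat.mul_le_mul_left N hf0
    omega
  refine ⟨main, ?_⟩
  rintro ⟨N, hN⟩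
  obtain ⟨n, hn, hxn⟩ := main N
  exact hN n hn hxn
end
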